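/- If a finite group G admits a ramification structure of size (3,3) (i.e., G is a Beauville group), then G admits a ramification structure of size (r₁, r₂) for every r₁, r₂ ≥ 3. -/
import Mathlib

/-- A spherical system of generators: a tuple (list) of nontrivial elements
generating `G` whose product is `1`. -/
def IsSpherical {G : Type*} [Group G] (T : List G) : Prop :=
  (∀ g ∈ T, g ≠ 1) ∧ Subgroup.closure {g : G | g ∈ T} = ⊤ ∧ T.prod = 1

/-- `Σ(T)`: the union of all conjugates of the cyclic subgroups generated by
the entries of `T`. -/
def SigmaSet {G : Type*} [Group G] (T : List G) : Set G :=
  {x : G | ∃ t ∈ T, ∃ c : G, ∃ k : ℤ, x = c * t ^ k * c⁻¹}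

/-- An (unmixed) ramification structure: a pair of spherical systems of
generators which are disjoint, i.e. `Σ(T₁) ∩ Σ(T₂) = {1}`. -/
def IsRamificationStructure {G : Type*} [Group G] (T₁ T₂ : List G) : Prop :=
  IsSpherical T₁ ∧ IsSpherical T₂ ∧ SigmaSet T₁ ∩ SigmaSet T₂ = {1}

private def padList {G : Type*} [Group G] (a : G) : ℕ → List G → List G
  | 0, T => T
  | n+1, T => padList a n T ++ [a, a⁻¹]

private lemma padList_length {G : Type*} [Group G] (a : G) (n : ℕ) (T : List G) :
    (padList a n T).length = T.length + 2 * n := by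
  induction n with
  | zero => simp [padList]
  | succ n ih => simp [padList, ih]; omega

private lemma mem_padList {G : Type*} [Group G] {a : G} {n : ℕ} {T : List G} {g : G}
    (hg : g ∈ padList a n T) : g ∈ T ∨ g = a ∨ g = a⁻¹ := by
  induction n with
  | zero => exact Or.inl hg
  | succ n ih =>
    simp only [padList, List.mem_append, List.mem_cons, List.mem_singleton] at hg
    rcases hg with hg | hg | hg | hg
    · exact ih hg
    · exact Or.inr (Or.inl hg)
    · exact Or.inr (Or.inr hg)
    · exact absurd hg (by simp)

private lemma subset_padList {G : Type*} [Group G] (a : G) (n : ℕ) (T : List G) {g : G}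
    (hg : g ∈ T) : g ∈ padList a n T := by
  induction n with
  | zero => exact hg
  | succ n ih => exact List.mem_append_left _ ih

private lemma padList_spherical {G : Type*} [Group G] {a : G} {T : List G}
    (hT : IsSpherical T) (ha : a ∈ T) (n : ℕ) : IsSpherical (padList a n T) := by
  obtain ⟨hnt, hcl, hprod⟩ := hT
  have ha1 : a ≠ 1 := hnt a ha
  induction n with
  | zero => exact ⟨hnt, hcl, hprod⟩
  | succ n ih =>
    obtain ⟨ih1, ih2, ih3⟩ := ih
    refine ⟨?_, ?_, ?_⟩
    · intro g hg
      rcases mem_padList hg with hg | hg | hg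
      · exact hnt g hg
      · exact hg ▸ ha1
      · exact hg ▸ (inv_ne_one.mpr ha1)
    · rw [eq_top_iff, ← ih2]
      exact Subgroup.closure_mono (fun g hg => List.mem_append_left _ hg)
    · simp [padList, List.prod_append, ih3]

private lemma sigma_mono {G : Type*} [Group G] {T S : List G}
    (h : ∀ g ∈ T, ∃ s ∈ S, ∃ m : ℤ, g = s ^ m) : SigmaSet T ⊆ SigmaSet S := by
  rintro x ⟨t, ht, c, k, rfl⟩
  obtain ⟨s, hs, m, rfl⟩ := h t ht
  exact ⟨s, hs, c, m * k, by rw [zpow_mul]⟩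

private lemma one_mem_sigma {G : Type*} [Group G] {T : List G} (hT : T ≠ []) :
    (1 : G) ∈ SigmaSet T := by
  obtain ⟨t, ht⟩ := List.exists_mem_of_ne_nil T hT
  exact ⟨t, ht, 1, 0, by simp⟩

private lemma key {G : Type*} [Group G] {a b c : G}
    (hT : IsSpherical [a, b, c]) (r : ℕ) (hr : r ≥ 3) :
    ∃ P : List G, P.length = r ∧ IsSpherical P ∧
      (∀ g ∈ P, ∃ s ∈ [a, b, c], ∃ m : ℤ, g = s ^ m) := by
  have ha : a ∈ [a, b, c] := by simp
  have hb : b ∈ [a, b, c] := by simp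
  have powcond : ∀ (B : List G), a ∈ B → b ∈ B →
      (∀ g ∈ B, g = a ∨ g = a⁻¹ ∨ g = b ∨ g = b⁻¹ ∨ g ∈ [a,b,c]) →
      ∀ n, ∀ g ∈ padList a n B, ∃ s ∈ [a, b, c], ∃ m : ℤ, g = s ^ m := by
    intro B haB hbB hB n g hg
    rcases mem_padList hg with hg | hg | hg
    · rcases hB g hg with hg' | hg' | hg' | hg' | hg'
      · exact ⟨a, ha, 1, by rw [hg', zpow_one]⟩
      · exact ⟨a, ha, -1, by simp [hg']⟩
      · exact ⟨b, hb, 1, by rw [hg', zpow_one]⟩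
      · exact ⟨b, hb, -1, by simp [hg']⟩
      · exact ⟨g, hg', 1, (zpow_one g).symm⟩
    · exact ⟨a, ha, 1, by simp [hg]⟩
    · exact ⟨a, ha, -1, by simp [hg]⟩
  rcases Nat.even_or_odd r with ⟨k, hk⟩ | ⟨k, hk⟩
  · -- r even, r = 4 + 2*(k-2)
    have hk2 : r = 4 + 2 * (k - 2) := by omega
    -- base [a, a⁻¹, b⁻¹, b]
    obtain ⟨hnt, hcl, hprod⟩ := hT
    have ha1 : a ≠ 1 := hnt a ha
    have hb1 : b ≠ 1 := hnt b hb
    have hc : c = b⁻¹ * a⁻¹ := by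
      have h' : (a * b) * c = 1 := by
        have : a * (b * (c * 1)) = 1 := hprod
        rw [mul_one] at this; rw [mul_assoc]; exact this
      rw [eq_inv_of_mul_eq_one_right h', mul_inv_rev]
    have hB : IsSpherical [a, a⁻¹, b⁻¹, b] := by
      refine ⟨?_, ?_, ?_⟩
      · intro g hg
        simp only [List.mem_cons, List.not_mem_nil, or_false] at hg
        rcases hg with rfl | rfl | rfl | rfl
        · exact ha1
        · exact inv_ne_one.mpr ha1
        · exact inv_ne_one.mpr hb1
        · exact hb1
      · rw [eq_top_iff, ← hcl]
        rw [Subgroup.closure_le]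
        intro g hg
        simp only [Set.mem_setOf_eq, List.mem_cons, List.not_mem_nil, or_false] at hg
        have maS : a ∈ Subgroup.closure {g : G | g ∈ [a, a⁻¹, b⁻¹, b]} :=
          Subgroup.subset_closure (by simp)
        have mbS : b ∈ Subgroup.closure {g : G | g ∈ [a, a⁻¹, b⁻¹, b]} :=
          Subgroup.subset_closure (by simp)
        rcases hg with hg' | hg' | hg' <;> subst hg'
        · exact maS
        · exact mbS
        · rw [hc]; exact mul_mem (inv_mem mbS) (inv_mem maS)
      · simp
    refine ⟨padList a (k - 2) [a, a⁻¹, b⁻¹, b], ?_, ?_, ?_⟩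
    · rw [padList_length]; simpa using hk2.symm
    · exact padList_spherical hB (by simp) _
    · refine powcond _ (by simp) (by simp) ?_ _
      intro g hg
      simp only [List.mem_cons, List.not_mem_nil, or_false] at hg
      tauto
  · -- r odd, r = 3 + 2*(k-1)
    have hk2 : r = 3 + 2 * (k - 1) := by omega
    refine ⟨padList a (k - 1) [a, b, c], ?_, ?_, ?_⟩
    · rw [padList_length]; simpa using hk2.symm
    · exact padList_spherical hT ha _
    · refine powcond _ ha hb ?_ _
      intro g hg
      tauto

theorem stmt_17 {G : Type*} [Group G] [Finite G]
    (h : ∃ T₁ T₂ : List G, T₁.length = 3 ∧ T₂.length = 3 ∧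
      IsRamificationStructure T₁ T₂)
    (r₁ r₂ : ℕ) (h₁ : r₁ ≥ 3) (h₂ : r₂ ≥ 3) :
    ∃ T₁ T₂ : List G, T₁.length = r₁ ∧ T₂.length = r₂ ∧
      IsRamificationStructure T₁ T₂ := by
  obtain ⟨T₁, T₂, hl₁, hl₂, hS₁, hS₂, hdisj⟩ := h
  obtain ⟨a₁, b₁, c₁, rfl⟩ := List.length_eq_three.mp hl₁
  obtain ⟨a₂, b₂, c₂, rfl⟩ := List.length_eq_three.mp hl₂
  obtain ⟨P₁, hP₁len, hP₁S, hP₁pow⟩ := key hS₁ r₁ h₁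
  obtain ⟨P₂, hP₂len, hP₂S, hP₂pow⟩ := key hS₂ r₂ h₂
  refine ⟨P₁, P₂, hP₁len, hP₂len, hP₁S, hP₂S, ?_⟩
  apply Set.Subset.antisymm
  · rintro x ⟨hx₁, hx₂⟩
    rw [← hdisj]
    exact ⟨sigma_mono hP₁pow hx₁, sigma_mono hP₂pow hx₂⟩
  · intro x hx
    rw [Set.mem_singleton_iff] at hx
    subst hx
    have h1 : P₁ ≠ [] := by intro h; rw [h] at hP₁len; simp at hP₁len; omega
    have h2 : P₂ ≠ [] := by intro h; rw [h] at hP₂len; simp at hP₂len; omega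
    exact ⟨one_mem_sigma h1, one_mem_sigma h2⟩
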